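/- Let X be a k-regular graph on v vertices with least adjacency eigenvalue τ. If S is an independent set with |S| = v/(1 - k/τ) and x is the characteristic vector of S, then x - (|S|/v)·1 is an eigenvector of A(X) with eigenvalue τ. -/

import Mathlib

open Matrix

/-- A real PSD matrix with vanishing quadratic form at `z` kills `z`. -/
lemma rbee_psd_quad_zero {V : Type*} [Fintype V] [DecidableEq V] {M : Matrix V V ℝ}
    (hM : M.PosSemidef) {z : V → ℝ} (hq : z ⬝ᵥ M *ᵥ z = 0) : M *ᵥ z = 0 := by
  exact (hM.dotProduct_mulVec_zero_iff z).mp (by simpa using hq)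

/-- If `τ` is at most every eigenvalue of the adjacency matrix, then `A - τ·I` is PSD. -/
lemma rbee_psd_shift {V : Type*} [Fintype V] [DecidableEq V]
    (G : SimpleGraph V) [DecidableRel G.Adj] (τ : ℝ)
    (hτ_least : ∀ (μ : ℝ) (y : V → ℝ), y ≠ 0 →
      (G.adjMatrix ℝ).mulVec y = μ • y → τ ≤ μ) :
    (G.adjMatrix ℝ - τ • (1 : Matrix V V ℝ)).PosSemidef := by
  have hH : (G.adjMatrix ℝ).IsHermitian := by
    ext i j
    simp [Matrix.conjTranspose_apply, G.adj_comm i j]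
  have hMH : (G.adjMatrix ℝ - τ • (1 : Matrix V V ℝ)).IsHermitian := by
    refine hH.sub ?_
    simpa [Matrix.IsHermitian] using congrArg (τ • ·) (Matrix.conjTranspose_one (α := ℝ) (n := V))
  refine hMH.posSemidef_iff_eigenvalues_nonneg.mpr fun i => ?_
  set y : V → ℝ := ⇑(hMH.eigenvectorBasis i) with hy
  have hy0 : y ≠ 0 := by
    have := hMH.eigenvectorBasis.toBasis.ne_zero i
    simpa [hy] using fun h => this (by ext u; exact congrFun (congrArg WithLp.ofLp h) u)
  have hMy : (G.adjMatrix ℝ - τ • (1 : Matrix V V ℝ)) *ᵥ y = hMH.eigenvalues i • y :=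
    hMH.mulVec_eigenvectorBasis i
  have hAy : (G.adjMatrix ℝ) *ᵥ y = (hMH.eigenvalues i + τ) • y := by
    have h := hMy
    rw [Matrix.sub_mulVec, Matrix.smul_mulVec, Matrix.one_mulVec, sub_eq_iff_eq_add] at h
    rw [h, add_smul]
  have := hτ_least _ y hy0 hAy
  simp only [Pi.zero_apply]
  linarith

theorem ratio_bound_equality_eigenvector
    {V : Type*} [Fintype V] [DecidableEq V]
    (G : SimpleGraph V) [DecidableRel G.Adj]
    (k : ℕ) (hreg : G.IsRegularOfDegree k)
    (τ : ℝ)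
    (hτ_eigen : ∃ y : V → ℝ, y ≠ 0 ∧ (G.adjMatrix ℝ).mulVec y = τ • y)
    (hτ_least : ∀ (μ : ℝ) (y : V → ℝ), y ≠ 0 →
      (G.adjMatrix ℝ).mulVec y = μ • y → τ ≤ μ)
    (S : Finset V) (hS : ∀ u ∈ S, ∀ w ∈ S, ¬ G.Adj u w)
    (hcard : (S.card : ℝ) = (Fintype.card V : ℝ) / (1 - (k : ℝ) / τ))
    (x : V → ℝ) (hx : x = fun u => if u ∈ S then (1 : ℝ) else 0) :
    (G.adjMatrix ℝ).mulVec (x - ((S.card : ℝ) / (Fintype.card V : ℝ)) • 1)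
      = τ • (x - ((S.card : ℝ) / (Fintype.card V : ℝ)) • 1) := by
  classical
  rcases isEmpty_or_nonempty V with hV | hV
  · funext u; exact isEmptyElim u
  have hnpos : (0:ℝ) < (Fintype.card V : ℝ) := by
    exact_mod_cast Fintype.card_pos
  have hn0 : (Fintype.card V : ℝ) ≠ 0 := ne_of_gt hnpos
  by_cases hτ0 : τ = 0
  · -- degenerate case: τ = 0 gives S = univ, z = 0
    subst hτ0
    simp only [div_zero, sub_zero, div_one] at hcard
    have hSuniv : S = Finset.univ := by
      apply Finset.eq_univ_of_card
      exact_mod_cast hcard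
    have hz : x - ((S.card : ℝ) / (Fintype.card V : ℝ)) • (1 : V → ℝ) = 0 := by
      funext u
      simp [hx, hSuniv, hcard, div_self hn0]
    rw [hz]
    simp
  by_cases hS0 : S = ∅
  · have hz : x - ((S.card : ℝ) / (Fintype.card V : ℝ)) • (1 : V → ℝ) = 0 := by
      funext u
      simp [hx, hS0]
    rw [hz]
    simp
  -- main case
  have hscard : (0:ℝ) < (S.card : ℝ) := by
    have : 0 < S.card := Finset.card_pos.mpr (Finset.nonempty_iff_ne_empty.mpr hS0)
    exact_mod_cast this
  set s : ℝ := (S.card : ℝ) with hs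
  set n : ℝ := (Fintype.card V : ℝ) with hndef
  have hd : (1 - (k:ℝ)/τ) ≠ 0 := by
    intro h
    rw [h, div_zero] at hcard
    exact absurd hcard (ne_of_gt hscard)
  have htk : τ - (k:ℝ) ≠ 0 := by
    intro h
    apply hd
    have hk : (k:ℝ) = τ := by linarith
    rw [hk, div_self hτ0]
    ring
  have hrel : s * (τ - (k:ℝ)) = n * τ := by
    rw [hcard]
    field_simp
  set c : ℝ := s / n with hc
  set z : V → ℝ := x - c • (1 : V → ℝ) with hz
  -- basic dot product facts
  have hA1 : (G.adjMatrix ℝ) *ᵥ (1 : V → ℝ) = (k:ℝ) • (1 : V → ℝ) := by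
    funext u
    have := G.adjMatrix_mulVec_const_apply_of_regular (α := ℝ) (a := (1:ℝ)) (hd := hreg) (v := u)
    simpa [Pi.one_def] using this
  have hx1 : x ⬝ᵥ (1 : V → ℝ) = s := by
    simp [hx, dotProduct, hs]
  have h1x : (1 : V → ℝ) ⬝ᵥ x = s := by
    simp [hx, dotProduct, hs]
  have hxx : x ⬝ᵥ x = s := by
    simp [hx, dotProduct, ite_and, hs]
  have h11 : (1 : V → ℝ) ⬝ᵥ (1 : V → ℝ) = n := by
    simp [dotProduct, hndef]
  have hxAx : x ⬝ᵥ ((G.adjMatrix ℝ) *ᵥ x) = 0 := by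
    rw [G.dotProduct_mulVec_adjMatrix]
    apply Finset.sum_eq_zero
    intro i _
    apply Finset.sum_eq_zero
    intro j _
    by_cases hij : G.Adj i j
    · simp only [hij, if_true, hx]
      by_cases hi : i ∈ S
      · by_cases hj : j ∈ S
        · exact absurd hij (hS i hi j hj)
        · simp [hj]
      · simp [hi]
    · simp [hij]
  have hAsymm : (G.adjMatrix ℝ)ᵀ = G.adjMatrix ℝ := G.isSymm_adjMatrix
  have hxA1 : x ⬝ᵥ ((G.adjMatrix ℝ) *ᵥ (1 : V → ℝ)) = (k:ℝ) * s := by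
    rw [hA1, dotProduct_smul, hx1, smul_eq_mul]
  have h1Ax : (1 : V → ℝ) ⬝ᵥ ((G.adjMatrix ℝ) *ᵥ x) = (k:ℝ) * s := by
    rw [dotProduct_mulVec, ← mulVec_transpose, hAsymm, hA1, smul_dotProduct, h1x, smul_eq_mul]
  have h1A1 : (1 : V → ℝ) ⬝ᵥ ((G.adjMatrix ℝ) *ᵥ (1 : V → ℝ)) = (k:ℝ) * n := by
    rw [hA1, dotProduct_smul, h11, smul_eq_mul]
  -- quadratic form vanishes
  have e1 : z ⬝ᵥ ((G.adjMatrix ℝ) *ᵥ z) = -(c * ((k:ℝ)*s)) - c * ((k:ℝ)*s) + c * (c * ((k:ℝ)*n)) := by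
    rw [hz, mulVec_sub, mulVec_smul]
    rw [sub_dotProduct, dotProduct_sub, dotProduct_sub, smul_dotProduct, smul_dotProduct,
      dotProduct_smul, dotProduct_smul]
    rw [hxAx, hxA1, h1Ax, h1A1]
    simp [smul_eq_mul]
    ring
  have e2 : z ⬝ᵥ z = s - 2*(c*s) + c*(c*n) := by
    rw [hz]
    rw [sub_dotProduct, dotProduct_sub, dotProduct_sub, smul_dotProduct, smul_dotProduct,
      dotProduct_smul, dotProduct_smul]
    rw [hxx, hx1, h1x, h11]
    simp [smul_eq_mul]
    ring
  have hq : z ⬝ᵥ ((G.adjMatrix ℝ - τ • (1 : Matrix V V ℝ)) *ᵥ z) = 0 := by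
    rw [Matrix.sub_mulVec, Matrix.smul_mulVec, Matrix.one_mulVec, dotProduct_sub,
      dotProduct_smul, e1, e2, smul_eq_mul]
    have h1cn : c * n = s := div_mul_cancel₀ s hn0
    linear_combination (c * (k:ℝ) - τ * c + τ) * h1cn + c * hrel
  have hMz := rbee_psd_quad_zero (rbee_psd_shift G τ hτ_least) hq
  rw [Matrix.sub_mulVec, Matrix.smul_mulVec, Matrix.one_mulVec, sub_eq_zero] at hMz
  exact hMz
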